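/- (Weighted lower semicontinuity.) Let ρ_n, ρ ∈ C⁰([0,1]) be nonnegative and let f_n, f : [0,1] → ℝ be measurable. Assume ρ_n → ρ uniformly on [0,1], f_n ρ_n → f ρ weakly in L¹((0,1)), f²ρ ∈ L¹((0,1)), and there is C < ∞ with ‖f_n² ρ_n‖_{L¹((0,1))} ≤ C for all n. Then ∫₀¹ f(t)² ρ(t) dt ≤ liminf_{n→∞} ∫₀¹ f_n(t)² ρ_n(t) dt. -/

import Mathlib

open MeasureTheory Filter

set_option maxHeartbeats 1000000

lemma wls_step1
    (ρn : ℕ → ℝ → ℝ) (ρ : ℝ → ℝ) (fn : ℕ → ℝ → ℝ) (f : ℝ → ℝ)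
    (hρnc : ∀ n, ContinuousOn (ρn n) (Set.Icc (0:ℝ) 1))
    (hρc : ContinuousOn ρ (Set.Icc (0:ℝ) 1))
    (hρnn : ∀ n, ∀ t ∈ Set.Icc (0:ℝ) 1, 0 ≤ ρn n t)
    (hρ0 : ∀ t ∈ Set.Icc (0:ℝ) 1, 0 ≤ ρ t)
    (hfnm : ∀ n, Measurable (fn n))
    (hunif : TendstoUniformlyOn ρn ρ atTop (Set.Icc (0:ℝ) 1))
    (hweak : ∀ φ : ℝ → ℝ, Measurable φ → (∃ C : ℝ, ∀ t, |φ t| ≤ C) →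
      Tendsto (fun n => ∫ t in Set.Ioo (0:ℝ) 1, fn n t * ρn n t * φ t) atTop
        (nhds (∫ t in Set.Ioo (0:ℝ) 1, f t * ρ t * φ t)))
    (C : ℝ)
    (hbd : ∀ n, MeasureTheory.IntegrableOn
        (fun t => (fn n t) ^ 2 * ρn n t) (Set.Ioo (0:ℝ) 1) ∧
      (∫ t in Set.Ioo (0:ℝ) 1, (fn n t) ^ 2 * ρn n t) ≤ C)
    (φ : ℝ → ℝ) (hφm : Measurable φ) (B : ℝ) (hφb : ∀ t, |φ t| ≤ B) :
    2 * (∫ t in Set.Ioo (0:ℝ) 1, f t * ρ t * φ t)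
        - (∫ t in Set.Ioo (0:ℝ) 1, φ t ^ 2 * ρ t)
      ≤ liminf (fun n => ∫ t in Set.Ioo (0:ℝ) 1, (fn n t) ^ 2 * ρn n t) atTop := by
  have hB0 : 0 ≤ B := le_trans (abs_nonneg _) (hφb 0)
  have hIoo : MeasurableSet (Set.Ioo (0:ℝ) 1) := measurableSet_Ioo
  have hsub : Set.Ioo (0:ℝ) 1 ⊆ Set.Icc (0:ℝ) 1 := Set.Ioo_subset_Icc_self
  have hμfin : volume (Set.Ioo (0:ℝ) 1) < ⊤ := measure_Ioo_lt_top
  have hρnasm : ∀ n, AEStronglyMeasurable (ρn n) (volume.restrict (Set.Ioo (0:ℝ) 1)) :=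
    fun n => ((hρnc n).mono hsub).aestronglyMeasurable hIoo
  have hρasm : AEStronglyMeasurable ρ (volume.restrict (Set.Ioo (0:ℝ) 1)) :=
    (hρc.mono hsub).aestronglyMeasurable hIoo
  have hρnint : ∀ n, IntegrableOn (ρn n) (Set.Ioo (0:ℝ) 1) :=
    fun n => ((hρnc n).integrableOn_Icc).mono_set hsub
  have hρint : IntegrableOn ρ (Set.Ioo (0:ℝ) 1) := hρc.integrableOn_Icc.mono_set hsub
  have hφsq : ∀ t, φ t ^ 2 ≤ B ^ 2 := by
    intro t
    calc φ t ^ 2 = |φ t| ^ 2 := (sq_abs _).symm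
    _ ≤ B ^ 2 := pow_le_pow_left₀ (abs_nonneg _) (hφb t) 2
  -- integrability of φ² ρn
  have hφ2ρn : ∀ n, IntegrableOn (fun t => φ t ^ 2 * ρn n t) (Set.Ioo (0:ℝ) 1) := by
    intro n
    refine Integrable.mono' ((hρnint n).const_mul (B^2))
      (((hφm.pow_const 2).aestronglyMeasurable).mul (hρnasm n)) ?_
    filter_upwards [ae_restrict_mem hIoo] with t ht
    have hr := hρnn n t (hsub ht)
    rw [Real.norm_eq_abs, abs_of_nonneg (mul_nonneg (sq_nonneg _) hr)]
    exact mul_le_mul_of_nonneg_right (hφsq t) hr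
  -- integrability of φ² ρ
  have hφ2ρ : IntegrableOn (fun t => φ t ^ 2 * ρ t) (Set.Ioo (0:ℝ) 1) := by
    refine Integrable.mono' (hρint.const_mul (B^2))
      (((hφm.pow_const 2).aestronglyMeasurable).mul hρasm) ?_
    filter_upwards [ae_restrict_mem hIoo] with t ht
    have hr := hρ0 t (hsub ht)
    rw [Real.norm_eq_abs, abs_of_nonneg (mul_nonneg (sq_nonneg _) hr)]
    exact mul_le_mul_of_nonneg_right (hφsq t) hr
  -- integrability of fn ρn φ
  have h1int : ∀ n, IntegrableOn (fun t => fn n t * ρn n t * φ t) (Set.Ioo (0:ℝ) 1) := by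
    intro n
    have hg : IntegrableOn (fun t => B/2 * (ρn n t + fn n t ^ 2 * ρn n t))
        (Set.Ioo (0:ℝ) 1) := ((hρnint n).add (hbd n).1).const_mul (B/2)
    refine Integrable.mono' hg
      (((hfnm n).aestronglyMeasurable.mul (hρnasm n)).mul hφm.aestronglyMeasurable) ?_
    filter_upwards [ae_restrict_mem hIoo] with t ht
    have hr := hρnn n t (hsub ht)
    rw [Real.norm_eq_abs, abs_mul, abs_mul, abs_of_nonneg hr, ← sq_abs (fn n t)]
    have e1 : |fn n t| * ρn n t * |φ t| ≤ B * (|fn n t| * ρn n t) := by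
      calc |fn n t| * ρn n t * |φ t| ≤ |fn n t| * ρn n t * B :=
        mul_le_mul_of_nonneg_left (hφb t) (mul_nonneg (abs_nonneg _) hr)
      _ = B * (|fn n t| * ρn n t) := by ring
    nlinarith [mul_nonneg (mul_nonneg hB0 hr) (sq_nonneg (|fn n t| - 1)), e1]
  -- pointwise (in n) inequality between the integrals
  have hle : ∀ n, 2 * (∫ t in Set.Ioo (0:ℝ) 1, fn n t * ρn n t * φ t)
      - (∫ t in Set.Ioo (0:ℝ) 1, φ t ^ 2 * ρn n t)
      ≤ ∫ t in Set.Ioo (0:ℝ) 1, (fn n t) ^ 2 * ρn n t := by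
    intro n
    have key : 0 ≤ ∫ t in Set.Ioo (0:ℝ) 1,
        ((fn n t) ^ 2 * ρn n t - 2 * (fn n t * ρn n t * φ t) + φ t ^ 2 * ρn n t) := by
      refine setIntegral_nonneg hIoo fun t ht => ?_
      have hr := hρnn n t (hsub ht)
      nlinarith [mul_nonneg (sq_nonneg (fn n t - φ t)) hr]
    have i1 : Integrable (fun t => (fn n t) ^ 2 * ρn n t - 2 * (fn n t * ρn n t * φ t))
        (volume.restrict (Set.Ioo (0:ℝ) 1)) := (hbd n).1.sub ((h1int n).const_mul 2)
    have i2 : Integrable (fun t => 2 * (fn n t * ρn n t * φ t))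
        (volume.restrict (Set.Ioo (0:ℝ) 1)) := (h1int n).const_mul 2
    rw [integral_add i1 (hφ2ρn n), integral_sub (hbd n).1 i2, integral_const_mul] at key
    linarith
  -- convergence of ∫ φ² ρn to ∫ φ² ρ
  have hBn : Tendsto (fun n => ∫ t in Set.Ioo (0:ℝ) 1, φ t ^ 2 * ρn n t) atTop
      (nhds (∫ t in Set.Ioo (0:ℝ) 1, φ t ^ 2 * ρ t)) := by
    refine Metric.tendsto_nhds.mpr fun ε hε => ?_
    have hε' : 0 < ε / (B^2 + 1) := by positivity
    filter_upwards [Metric.tendstoUniformlyOn_iff.mp hunif _ hε'] with n hn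
    rw [Real.dist_eq, ← integral_sub (hφ2ρn n) hφ2ρ]
    have hb : ∀ t ∈ Set.Ioo (0:ℝ) 1,
        ‖φ t ^ 2 * ρn n t - φ t ^ 2 * ρ t‖ ≤ B^2 * (ε / (B^2 + 1)) := by
      intro t ht
      have hd := hn t (hsub ht)
      rw [Real.dist_eq] at hd
      rw [Real.norm_eq_abs, ← mul_sub, abs_mul, abs_of_nonneg (sq_nonneg (φ t))]
      have h1 : |ρn n t - ρ t| ≤ ε / (B^2 + 1) := by
        rw [abs_sub_comm]; linarith
      exact mul_le_mul (hφsq t) h1 (abs_nonneg _) (by positivity)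
    have hnorm := norm_setIntegral_le_of_norm_le_const hμfin hb
    have hvol : volume.real (Set.Ioo (0:ℝ) 1) = 1 := by
      rw [measureReal_def, Real.volume_Ioo]; norm_num
    rw [hvol, mul_one, Real.norm_eq_abs] at hnorm
    have hlt : B^2 * (ε / (B^2 + 1)) < ε := by
      rw [mul_comm, div_mul_eq_mul_div, div_lt_iff₀ (by positivity : (0:ℝ) < B^2 + 1)]
      nlinarith [hε]
    exact lt_of_le_of_lt hnorm hlt
  -- conclude with liminf
  have hA := hweak φ hφm ⟨B, hφb⟩
  have ha : Tendsto (fun n => 2 * (∫ t in Set.Ioo (0:ℝ) 1, fn n t * ρn n t * φ t)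
      - (∫ t in Set.Ioo (0:ℝ) 1, φ t ^ 2 * ρn n t)) atTop
      (nhds (2 * (∫ t in Set.Ioo (0:ℝ) 1, f t * ρ t * φ t)
        - (∫ t in Set.Ioo (0:ℝ) 1, φ t ^ 2 * ρ t))) := (hA.const_mul 2).sub hBn
  have hcb : IsCoboundedUnder (· ≥ ·) atTop
      (fun n => ∫ t in Set.Ioo (0:ℝ) 1, (fn n t) ^ 2 * ρn n t) :=
    IsBoundedUnder.isCoboundedUnder_ge (isBoundedUnder_of ⟨C, fun n => (hbd n).2⟩)
  have hbdd : IsBoundedUnder (· ≥ ·) atTop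
      (fun n => 2 * (∫ t in Set.Ioo (0:ℝ) 1, fn n t * ρn n t * φ t)
        - (∫ t in Set.Ioo (0:ℝ) 1, φ t ^ 2 * ρn n t)) := ha.isBoundedUnder_ge
  calc 2 * (∫ t in Set.Ioo (0:ℝ) 1, f t * ρ t * φ t)
      - (∫ t in Set.Ioo (0:ℝ) 1, φ t ^ 2 * ρ t)
      = liminf (fun n => 2 * (∫ t in Set.Ioo (0:ℝ) 1, fn n t * ρn n t * φ t)
        - (∫ t in Set.Ioo (0:ℝ) 1, φ t ^ 2 * ρn n t)) atTop := ha.liminf_eq.symm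
  _ ≤ liminf (fun n => ∫ t in Set.Ioo (0:ℝ) 1, (fn n t) ^ 2 * ρn n t) atTop :=
      liminf_le_liminf (Eventually.of_forall hle) hbdd hcb

/-- **Weighted lower semicontinuity.** If `ρ_n → ρ` uniformly on `[0,1]` with `ρ_n, ρ`
continuous and nonnegative, `f_n ρ_n → f ρ` weakly in `L¹((0,1))`, `f²ρ ∈ L¹((0,1))` and
`‖f_n² ρ_n‖_{L¹((0,1))} ≤ C`, then `∫₀¹ f²ρ ≤ liminf ∫₀¹ f_n²ρ_n`. -/
theorem weighted_lower_semicontinuity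
    (ρn : ℕ → ℝ → ℝ) (ρ : ℝ → ℝ) (fn : ℕ → ℝ → ℝ) (f : ℝ → ℝ)
    (hρnc : ∀ n, ContinuousOn (ρn n) (Set.Icc (0:ℝ) 1))
    (hρc : ContinuousOn ρ (Set.Icc (0:ℝ) 1))
    (hρnn : ∀ n, ∀ t ∈ Set.Icc (0:ℝ) 1, 0 ≤ ρn n t)
    (hρ0 : ∀ t ∈ Set.Icc (0:ℝ) 1, 0 ≤ ρ t)
    (hfm : Measurable f) (hfnm : ∀ n, Measurable (fn n))
    (hunif : TendstoUniformlyOn ρn ρ atTop (Set.Icc (0:ℝ) 1))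
    (hweak : ∀ φ : ℝ → ℝ, Measurable φ → (∃ C : ℝ, ∀ t, |φ t| ≤ C) →
      Tendsto (fun n => ∫ t in Set.Ioo (0:ℝ) 1, fn n t * ρn n t * φ t) atTop
        (nhds (∫ t in Set.Ioo (0:ℝ) 1, f t * ρ t * φ t)))
    (hint : MeasureTheory.IntegrableOn (fun t => (f t) ^ 2 * ρ t) (Set.Ioo (0:ℝ) 1))
    (C : ℝ)
    (hbd : ∀ n, MeasureTheory.IntegrableOn
        (fun t => (fn n t) ^ 2 * ρn n t) (Set.Ioo (0:ℝ) 1) ∧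
      (∫ t in Set.Ioo (0:ℝ) 1, (fn n t) ^ 2 * ρn n t) ≤ C) :
    (∫ t in Set.Ioo (0:ℝ) 1, (f t) ^ 2 * ρ t)
      ≤ Filter.liminf (fun n => ∫ t in Set.Ioo (0:ℝ) 1, (fn n t) ^ 2 * ρn n t) atTop := by
  have hIoo : MeasurableSet (Set.Ioo (0:ℝ) 1) := measurableSet_Ioo
  have hsub : Set.Ioo (0:ℝ) 1 ⊆ Set.Icc (0:ℝ) 1 := Set.Ioo_subset_Icc_self
  have hρasm : AEStronglyMeasurable ρ (volume.restrict (Set.Ioo (0:ℝ) 1)) :=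
    (hρc.mono hsub).aestronglyMeasurable hIoo
  -- truncations
  set φ : ℕ → ℝ → ℝ := fun m t => max (-(m:ℝ)) (min (m:ℝ) (f t)) with hφdef
  have hφm : ∀ m, Measurable (φ m) := fun m =>
    measurable_const.max (measurable_const.min hfm)
  have hφb : ∀ m t, |φ m t| ≤ (m:ℝ) := by
    intro m t
    rw [abs_le]
    exact ⟨le_max_left _ _, max_le (by simp) (min_le_left _ _)⟩
  have hφf : ∀ m t, |φ m t| ≤ |f t| := by
    intro m t
    rw [abs_le]
    constructor
    · refine le_trans (le_min ?_ (neg_abs_le (f t))) (le_max_right _ _)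
      exact le_trans (neg_nonpos_of_nonneg (abs_nonneg _)) (Nat.cast_nonneg m)
    · exact max_le (le_trans (neg_nonpos_of_nonneg (Nat.cast_nonneg m)) (abs_nonneg _))
        (le_trans (min_le_right _ _) (le_abs_self _))
  have hφsq : ∀ m t, φ m t ^ 2 ≤ f t ^ 2 := by
    intro m t
    calc φ m t ^ 2 = |φ m t| ^ 2 := (sq_abs _).symm
    _ ≤ |f t| ^ 2 := pow_le_pow_left₀ (abs_nonneg _) (hφf m t) 2
    _ = f t ^ 2 := sq_abs _
  have hmul : ∀ m t, |f t * φ m t| ≤ f t ^ 2 := by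
    intro m t
    calc |f t * φ m t| = |f t| * |φ m t| := abs_mul _ _
    _ ≤ |f t| * |f t| := mul_le_mul_of_nonneg_left (hφf m t) (abs_nonneg _)
    _ = f t ^ 2 := by rw [← abs_mul, abs_mul_self]; ring
  -- integrability of f ρ φm and φm² ρ
  have hA'int : ∀ m, IntegrableOn (fun t => f t * ρ t * φ m t) (Set.Ioo (0:ℝ) 1) := by
    intro m
    refine Integrable.mono' hint
      ((hfm.aestronglyMeasurable.mul hρasm).mul (hφm m).aestronglyMeasurable) ?_
    filter_upwards [ae_restrict_mem hIoo] with t ht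
    have hr := hρ0 t (hsub ht)
    rw [Real.norm_eq_abs, show f t * ρ t * φ m t = f t * φ m t * ρ t by ring,
      abs_mul, abs_of_nonneg hr]
    exact mul_le_mul_of_nonneg_right (hmul m t) hr
  have hB'int : ∀ m, IntegrableOn (fun t => φ m t ^ 2 * ρ t) (Set.Ioo (0:ℝ) 1) := by
    intro m
    refine Integrable.mono' hint
      (((hφm m).pow_const 2).aestronglyMeasurable.mul hρasm) ?_
    filter_upwards [ae_restrict_mem hIoo] with t ht
    have hr := hρ0 t (hsub ht)
    rw [Real.norm_eq_abs, abs_of_nonneg (mul_nonneg (sq_nonneg _) hr)]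
    exact mul_le_mul_of_nonneg_right (hφsq m t) hr
  -- dominated convergence
  have hDC : Tendsto (fun m => ∫ t in Set.Ioo (0:ℝ) 1,
      (2 * (f t * ρ t * φ m t) - φ m t ^ 2 * ρ t)) atTop
      (nhds (∫ t in Set.Ioo (0:ℝ) 1, (f t) ^ 2 * ρ t)) := by
    refine tendsto_integral_of_dominated_convergence (fun t => 3 * ((f t) ^ 2 * ρ t))
      (fun m => ((aestronglyMeasurable_const.mul
        ((hfm.aestronglyMeasurable.mul hρasm).mul (hφm m).aestronglyMeasurable)).sub
        (((hφm m).pow_const 2).aestronglyMeasurable.mul hρasm)))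
      (hint.const_mul 3) ?_ ?_
    · intro m
      filter_upwards [ae_restrict_mem hIoo] with t ht
      have hr := hρ0 t (hsub ht)
      rw [Real.norm_eq_abs]
      have e3 : |2 * (f t * ρ t * φ m t)| = 2 * (|f t * φ m t| * ρ t) := by
        rw [show 2 * (f t * ρ t * φ m t) = 2 * (f t * φ m t * ρ t) by ring,
          abs_mul, abs_mul, abs_of_nonneg hr, abs_of_nonneg (by norm_num : (0:ℝ) ≤ 2)]
      have e4 : |φ m t ^ 2 * ρ t| = φ m t ^ 2 * ρ t :=
        abs_of_nonneg (mul_nonneg (sq_nonneg _) hr)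
      have e5 : |f t * φ m t| * ρ t ≤ f t ^ 2 * ρ t :=
        mul_le_mul_of_nonneg_right (hmul m t) hr
      have e6 : φ m t ^ 2 * ρ t ≤ f t ^ 2 * ρ t :=
        mul_le_mul_of_nonneg_right (hφsq m t) hr
      calc |2 * (f t * ρ t * φ m t) - φ m t ^ 2 * ρ t|
          ≤ |2 * (f t * ρ t * φ m t)| + |φ m t ^ 2 * ρ t| := abs_sub _ _
      _ = 2 * (|f t * φ m t| * ρ t) + φ m t ^ 2 * ρ t := by rw [e3, e4]
      _ ≤ 2 * (f t ^ 2 * ρ t) + f t ^ 2 * ρ t := by linarith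
      _ = 3 * (f t ^ 2 * ρ t) := by ring
    · refine Eventually.of_forall fun t => ?_
      have hev : ∀ᶠ m in atTop,
          (f t) ^ 2 * ρ t = 2 * (f t * ρ t * φ m t) - φ m t ^ 2 * ρ t := by
        filter_upwards [eventually_ge_atTop ⌈|f t|⌉₊] with m hm
        have hmr : |f t| ≤ (m:ℝ) := le_trans (Nat.le_ceil _) (Nat.cast_le.mpr hm)
        have hφeq : φ m t = f t := by
          rw [hφdef]
          dsimp only
          rw [min_eq_right (le_trans (le_abs_self _) hmr),
            max_eq_right (le_trans (neg_le_neg hmr) (neg_abs_le _))]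
        rw [hφeq]; ring
      exact Tendsto.congr' hev tendsto_const_nhds
  -- rewrite the integrand of hDC as a difference of integrals
  have hsplit : ∀ m, (∫ t in Set.Ioo (0:ℝ) 1,
      (2 * (f t * ρ t * φ m t) - φ m t ^ 2 * ρ t))
      = 2 * (∫ t in Set.Ioo (0:ℝ) 1, f t * ρ t * φ m t)
        - (∫ t in Set.Ioo (0:ℝ) 1, φ m t ^ 2 * ρ t) := by
    intro m
    rw [integral_sub ((hA'int m).const_mul 2) (hB'int m), integral_const_mul]
  refine le_of_tendsto hDC ?_
  refine Eventually.of_forall fun m => ?_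
  rw [hsplit m]
  exact wls_step1 ρn ρ fn f hρnc hρc hρnn hρ0 hfnm hunif hweak C hbd
    (φ m) (hφm m) (m:ℝ) (hφb m)
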